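/- Fix M ≥ 1, an index k, nonnegative reals a₁,…,a_M, and d > 0, and define f : ℝ^M → ℝ by f(α) = a_k·α_k / (Σ_{i≠k} a_i·α_i + d) and R(α) = log₂(1 + f(α)). Let S = {α ∈ ℝ^M : α_i ≥ 0 for all i}. Then R is differentiable on S and pseudolinear on S, i.e., for all x, y ∈ S: (i) if the Fréchet derivative of R at y applied to (x − y) is ≥ 0 then R(x) ≥ R(y), and (ii) if it is ≤ 0 then R(x) ≤ R(y). -/

import Mathlib

open Finset

set_option maxHeartbeats 1000000 in
/-- Pseudolinearity of the throughput in the backscattering coefficients: with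
f(α) = a_k α_k / (∑_{i≠k} a_i α_i + d) and R(α) = log₂(1 + f(α)), R is differentiable on the
nonnegative orthant S and pseudolinear on S: for x, y ∈ S, R'(y)(x−y) ≥ 0 ⟹ R(x) ≥ R(y) and
R'(y)(x−y) ≤ 0 ⟹ R(x) ≤ R(y). -/
theorem throughput_pseudolinear_in_alpha (M : ℕ) (hM : 1 ≤ M) (k : Fin M)
    (a : Fin M → ℝ) (ha : ∀ i, 0 ≤ a i) (d : ℝ) (hd : 0 < d) :
    let f : (Fin M → ℝ) → ℝ :=
      fun α => a k * α k / (∑ i ∈ univ.erase k, a i * α i + d)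
    let R : (Fin M → ℝ) → ℝ := fun α => Real.logb 2 (1 + f α)
    let S : Set (Fin M → ℝ) := {α | ∀ i, 0 ≤ α i}
    DifferentiableOn ℝ R S ∧
      ∀ x ∈ S, ∀ y ∈ S,
        (0 ≤ fderiv ℝ R y (x - y) → R y ≤ R x) ∧
        (fderiv ℝ R y (x - y) ≤ 0 → R x ≤ R y) := by
  intro f R S
  have hlog2 : (0:ℝ) < Real.log 2 := Real.log_pos one_lt_two
  set g : (Fin M → ℝ) → ℝ := fun α => ∑ i ∈ univ.erase k, a i * α i with hg
  have hgnn : ∀ z ∈ S, 0 ≤ g z := by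
    intro z hz
    exact Finset.sum_nonneg fun i _ => mul_nonneg (ha i) (hz i)
  have hDpos : ∀ z ∈ S, 0 < g z + d := by
    intro z hz
    have := hgnn z hz; linarith
  have hfnn : ∀ z ∈ S, 0 ≤ f z := by
    intro z hz
    exact div_nonneg (mul_nonneg (ha k) (hz k)) (hDpos z hz).le
  -- continuous linear maps
  set N : (Fin M → ℝ) →L[ℝ] ℝ := a k • ContinuousLinearMap.proj k with hN
  set G : (Fin M → ℝ) →L[ℝ] ℝ := ∑ i ∈ univ.erase k, a i • ContinuousLinearMap.proj i with hG
  have eN : (fun α : Fin M → ℝ => a k * α k) = ⇑N := by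
    funext v; simp [hN]
  have eG : g = ⇑G := by
    funext v; simp [hg, hG, ContinuousLinearMap.sum_apply]
  have key : ∀ y ∈ S, HasFDerivAt R
      ((Real.log 2)⁻¹ • ((1 + f y)⁻¹ •
        ((a k * y k) • ((-((g y + d) ^ 2)⁻¹) • G) + (g y + d)⁻¹ • N))) y := by
    intro y hy
    have hDy := hDpos y hy
    have hn : HasFDerivAt (fun α : Fin M → ℝ => a k * α k) N y := eN ▸ N.hasFDerivAt
    have hgd : HasFDerivAt (fun α : Fin M → ℝ => g α + d) G y := by
      have : HasFDerivAt g G y := eG ▸ G.hasFDerivAt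
      exact this.add_const d
    have hinv : HasFDerivAt (fun α : Fin M → ℝ => (g α + d)⁻¹)
        ((-((g y + d) ^ 2)⁻¹) • G) y :=
      (hasDerivAt_inv hDy.ne').comp_hasFDerivAt y hgd
    have hmul := hn.mul hinv
    have hf' : HasFDerivAt f
        ((a k * y k) • ((-((g y + d) ^ 2)⁻¹) • G) + (g y + d)⁻¹ • N) y := by
      show HasFDerivAt (fun α => a k * α k / (∑ i ∈ univ.erase k, a i * α i + d)) _ y
      simpa [div_eq_mul_inv, hg, Pi.mul_def] using hmul
    have h1f : 0 < 1 + f y := by have := hfnn y hy; linarith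
    have hlogf : HasFDerivAt (fun α => Real.log (1 + f α))
        ((1 + f y)⁻¹ • ((a k * y k) • ((-((g y + d) ^ 2)⁻¹) • G) + (g y + d)⁻¹ • N)) y :=
      by have := (Real.hasDerivAt_log h1f.ne').comp_hasFDerivAt y (hf'.const_add 1); exact this
    have := hlogf.const_mul (Real.log 2)⁻¹
    have eqR : (fun α => (Real.log 2)⁻¹ * Real.log (1 + f α)) = R := by
      funext α
      show _ = Real.logb 2 (1 + f α)
      rw [Real.logb, div_eq_inv_mul]
    exact eqR ▸ this
  refine ⟨fun y hy => ((key y hy).differentiableAt).differentiableWithinAt, ?_⟩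
  intro x hx y hy
  have hDx := hDpos x hx
  have hDy := hDpos y hy
  have h1f : 0 < 1 + f y := by have := hfnn y hy; linarith
  have h1fx : 0 < 1 + f x := by have := hfnn x hx; linarith
  have hGxy : G (x - y) = g x - g y := by
    rw [map_sub, ← eG]
  have hNxy : N (x - y) = a k * x k - a k * y k := by
    rw [map_sub, ← eN]
  have hfd := (key y hy).fderiv
  set T : ℝ := (a k * x k) * (g y + d) - (a k * y k) * (g x + d) with hT
  have hfy : f y = a k * y k / (g y + d) := rfl
  have hfx : f x = a k * x k / (g x + d) := rfl
  have hc : 0 < Real.log 2 * (1 + f y) * (g y + d) ^ 2 := by positivity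
  have hval : fderiv ℝ R y (x - y) = T / (Real.log 2 * (1 + f y) * (g y + d) ^ 2) := by
    rw [hfd]
    simp only [ContinuousLinearMap.smul_apply, ContinuousLinearMap.add_apply, smul_eq_mul,
      hGxy, hNxy, hT]
    field_simp
    ring
  have hdiff : f x - f y = T / ((g x + d) * (g y + d)) := by
    rw [hfx, hfy, hT]
    field_simp
  constructor
  · intro h
    rw [hval] at h
    have hTnn : 0 ≤ T := by
      have : T = (T / (Real.log 2 * (1 + f y) * (g y + d) ^ 2)) *
          (Real.log 2 * (1 + f y) * (g y + d) ^ 2) := (div_mul_cancel₀ T hc.ne').symm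
      rw [this]; exact mul_nonneg h hc.le
    have hfle : f y ≤ f x := by
      have : 0 ≤ f x - f y := by
        rw [hdiff]; exact div_nonneg hTnn (by positivity)
      linarith
    exact Real.logb_le_logb_of_le one_lt_two h1f (by linarith)
  · intro h
    rw [hval] at h
    have hTnp : T ≤ 0 := by
      have : T = (T / (Real.log 2 * (1 + f y) * (g y + d) ^ 2)) *
          (Real.log 2 * (1 + f y) * (g y + d) ^ 2) := (div_mul_cancel₀ T hc.ne').symm
      rw [this]; exact mul_nonpos_of_nonpos_of_nonneg h hc.le
    have hfle : f x ≤ f y := by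
      have : f x - f y ≤ 0 := by
        rw [hdiff]
        exact div_nonpos_of_nonpos_of_nonneg hTnp (by positivity)
      linarith
    exact Real.logb_le_logb_of_le one_lt_two h1fx (by linarith)
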